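/- arXiv:1406.4765 — 4 statements merged into one kernel-verified Lean document; each statement's English description precedes it below -/
import Mathlib

section
/- Let z = (z_1, ..., z_p) be a random vector with independent components, E(z_i) = 0, E(z_i^2) = 1, and κ_i = E(z_i^4) - 3. Then for every orthogonal p×p matrix U with rows u_1', ..., u_p', one has Σ_{k=1}^p |E((u_k'z)^4) - 3| ≤ Σ_{i=1}^p |κ_i|. -/
open MeasureTheory ProbabilityTheory Matrix
open scoped ENNReal

section Aux

variable {Ω : Type*} [MeasureSpace Ω] [IsProbabilityMeasure (ℙ : Measure Ω)]

lemma aux_integrable_pow_of_memL4 {f : Ω → ℝ} (hf : MemLp f 4 ℙ) {k : ℕ} (hk : k ≤ 4) :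
    Integrable (fun ω => f ω ^ k) ℙ := by
  have h2 : MemLp (fun ω => f ω ^ 2) 2 ℙ := by
    have := hf.smul (𝕜 := ℝ) hf (p := 4) (q := 4) (r := 2) (hpqr := ⟨by
      rw [← two_mul, show (4:ℝ≥0∞) = 2*2 by norm_num,
        ENNReal.mul_inv (by norm_num) (by norm_num),
        ← mul_assoc, ENNReal.mul_inv_cancel (by norm_num) (by norm_num), one_mul]⟩)
    have heq : f • f = fun ω => f ω ^ 2 := by
      funext ω
      simp [Pi.smul_apply', Pi.smul_apply, smul_eq_mul, pow_two]
    rwa [heq] at this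
  have h4 : Integrable (fun ω => f ω ^ 4) ℙ := by
    rw [← memLp_one_iff_integrable]
    have := h2.smul (𝕜 := ℝ) h2 (p := 2) (q := 2) (r := 1) (hpqr := ⟨by
      simp only [one_div, inv_one]
      exact ENNReal.inv_two_add_inv_two⟩)
    have heq : (fun ω => f ω ^ 2) • (fun ω => f ω ^ 2) = fun ω => f ω ^ 4 := by
      funext ω; simp [Pi.smul_apply, smul_eq_mul, ← pow_add]
    rwa [heq] at this
  refine (h4.add (integrable_const 1)).mono' (hf.aestronglyMeasurable.pow k) ?_
  refine Filter.Eventually.of_forall fun ω => ?_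
  have h0 : (0:ℝ) ≤ f ω ^ 4 := by positivity
  have habs : ‖f ω ^ k‖ = |f ω| ^ k := by rw [Real.norm_eq_abs, abs_pow]
  rw [habs]
  rcases le_total (|f ω|) 1 with h | h
  · have : |f ω| ^ k ≤ 1 := pow_le_one₀ (abs_nonneg _) h
    simpa using le_trans this (by linarith)
  · have h1 : |f ω| ^ k ≤ |f ω| ^ 4 := pow_le_pow_right₀ h hk
    have h2' : |f ω| ^ 4 = f ω ^ 4 := by
      rw [← abs_pow, abs_of_nonneg h0]
    simp only [Pi.add_apply]
    rw [h2'] at h1; linarith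

lemma aux_moments {p : ℕ} (z : Fin p → Ω → ℝ) (a : Fin p → ℝ)
    (hmeas : ∀ i, Measurable (z i))
    (hindep : iIndepFun z ℙ)
    (hL4 : ∀ i, MemLp (z i) 4 ℙ)
    (hmean : ∀ i, ∫ ω, z i ω = 0)
    (hvar : ∀ i, ∫ ω, (z i ω) ^ 2 = 1)
    (A : Finset (Fin p)) :
    (∫ ω, (∑ i ∈ A, a i * z i ω)) = 0 ∧
    (∫ ω, (∑ i ∈ A, a i * z i ω) ^ 2) = ∑ i ∈ A, a i ^ 2 ∧
    (∫ ω, (∑ i ∈ A, a i * z i ω) ^ 4)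
      = 3 * (∑ i ∈ A, a i ^ 2) ^ 2 + ∑ i ∈ A, a i ^ 4 * ((∫ ω, (z i ω) ^ 4) - 3) := by
  classical
  induction A using Finset.induction_on with
  | empty => simp
  | @insert i s hi ih =>
    obtain ⟨ih1, ih2, ih4⟩ := ih
    set T : Ω → ℝ := fun ω => ∑ j ∈ s, a j * z j ω with hT
    set c : ℝ := a i with hc
    set Z : Ω → ℝ := z i with hZ
    have hTmem : MemLp T 4 ℙ :=
      memLp_finset_sum s (fun j _ => (hL4 j).const_mul (a j))
    have hZmem : MemLp Z 4 ℙ := hL4 i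
    have hTint : ∀ k : ℕ, k ≤ 4 → Integrable (fun ω => T ω ^ k) ℙ :=
      fun k hk => aux_integrable_pow_of_memL4 hTmem hk
    have hZint : ∀ k : ℕ, k ≤ 4 → Integrable (fun ω => Z ω ^ k) ℙ :=
      fun k hk => aux_integrable_pow_of_memL4 hZmem hk
    -- independence of T and Z
    have hTZ : IndepFun T Z ℙ := by
      set b : Fin p → ℝ := fun j => if j = i then 1 else a j with hb
      have hw : iIndepFun (fun j => fun ω => b j * z j ω) ℙ :=
        hindep.comp (fun j x => b j * x) (fun j => measurable_id.const_mul (b j))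
      have hmeas' : ∀ j, Measurable (fun ω => b j * z j ω) :=
        fun j => (hmeas j).const_mul (b j)
      have h := hw.indepFun_finset_sum_of_notMem hmeas' hi
      have hsum : (∑ j ∈ s, fun ω => b j * z j ω) = T := by
        funext ω
        rw [Finset.sum_apply]
        refine Finset.sum_congr rfl fun j hj => ?_
        rw [hb]; simp only []
        rw [if_neg (ne_of_mem_of_not_mem hj hi)]
      have hbi : (fun ω => b i * z i ω) = Z := by funext ω; simp [hb, hZ]
      rwa [hsum, hbi] at h
    have hTZpow : ∀ m n : ℕ, IndepFun (fun ω => T ω ^ m) (fun ω => Z ω ^ n) ℙ :=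
      fun m n => hTZ.comp (measurable_id.pow_const m) (measurable_id.pow_const n)
    have hint_mul : ∀ m n : ℕ, m ≤ 4 → n ≤ 4 →
        Integrable (fun ω => T ω ^ m * Z ω ^ n) ℙ := by
      intro m n hm hn
      have := (hTZpow m n).integrable_mul (hTint m hm) (hZint n hn)
      exact this
    have hmul_int : ∀ m n : ℕ, (∫ ω, T ω ^ m * Z ω ^ n)
        = (∫ ω, T ω ^ m) * ∫ ω, Z ω ^ n := by
      intro m n
      have := (hTZpow m n).integral_mul_eq_mul_integral
        (hTmem.aestronglyMeasurable.pow m) (hZmem.aestronglyMeasurable.pow n)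
      simpa [Pi.mul_apply] using this
    -- basic integrals
    have hZ1 : (∫ ω, Z ω) = 0 := hmean i
    have hZ2 : (∫ ω, Z ω ^ 2) = 1 := hvar i
    have hT1' : (∫ ω, T ω ^ 1) = 0 := by simp only [pow_one]; exact ih1
    have hZ1' : (∫ ω, Z ω ^ 1) = 0 := by simp only [pow_one]; exact hZ1
    have hT2' : (∫ ω, T ω ^ 2) = ∑ j ∈ s, a j ^ 2 := ih2
    have hT4' : (∫ ω, T ω ^ 4)
        = 3 * (∑ j ∈ s, a j ^ 2) ^ 2 + ∑ j ∈ s, a j ^ 4 * ((∫ ω, (z j ω) ^ 4) - 3) := ih4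
    have hsum_eq : ∀ ω, (∑ j ∈ insert i s, a j * z j ω) = T ω + c * Z ω := by
      intro ω; rw [Finset.sum_insert hi]; ring
    have hTint1 : Integrable T ℙ := by simpa using hTint 1 (by norm_num)
    have hZint1 : Integrable Z ℙ := by simpa using hZint 1 (by norm_num)
    -- first moment
    have hm1 : (∫ ω, (∑ j ∈ insert i s, a j * z j ω)) = 0 := by
      calc (∫ ω, (∑ j ∈ insert i s, a j * z j ω))
          = ∫ ω, (T ω + c * Z ω) :=
            integral_congr_ae (Filter.Eventually.of_forall fun ω => hsum_eq ω)
        _ = (∫ ω, T ω) + ∫ ω, c * Z ω := integral_add hTint1 (hZint1.const_mul c)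
        _ = 0 := by rw [integral_const_mul, ih1, hZ1]; ring
    -- second moment
    have hm2 : (∫ ω, (∑ j ∈ insert i s, a j * z j ω) ^ 2) = ∑ j ∈ insert i s, a j ^ 2 := by
      have hint1 : Integrable (fun ω => T ω ^ 2) ℙ := hTint 2 (by norm_num)
      have hint2 : Integrable (fun ω => (2 * c) * (T ω ^ 1 * Z ω ^ 1)) ℙ :=
        (hint_mul 1 1 (by norm_num) (by norm_num)).const_mul _
      have hint3 : Integrable (fun ω => c ^ 2 * Z ω ^ 2) ℙ :=
        (hZint 2 (by norm_num)).const_mul _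
      have hint12 : Integrable (fun ω => T ω ^ 2 + (2 * c) * (T ω ^ 1 * Z ω ^ 1)) ℙ :=
        hint1.add hint2
      have eA : (∫ ω, (2 * c) * (T ω ^ 1 * Z ω ^ 1)) = 0 := by
        rw [integral_const_mul, hmul_int 1 1, hZ1', mul_zero, mul_zero]
      have eC : (∫ ω, c ^ 2 * Z ω ^ 2) = c ^ 2 := by
        rw [integral_const_mul, hZ2, mul_one]
      calc (∫ ω, (∑ j ∈ insert i s, a j * z j ω) ^ 2)
          = ∫ ω, (T ω ^ 2 + (2 * c) * (T ω ^ 1 * Z ω ^ 1) + c ^ 2 * Z ω ^ 2) :=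
            integral_congr_ae (Filter.Eventually.of_forall fun ω => by
              show (∑ j ∈ insert i s, a j * z j ω) ^ 2 = _
              rw [hsum_eq ω]; ring)
        _ = (∫ ω, (T ω ^ 2 + (2 * c) * (T ω ^ 1 * Z ω ^ 1))) + ∫ ω, c ^ 2 * Z ω ^ 2 :=
            integral_add hint12 hint3
        _ = ((∫ ω, T ω ^ 2) + ∫ ω, (2 * c) * (T ω ^ 1 * Z ω ^ 1)) + ∫ ω, c ^ 2 * Z ω ^ 2 := by
            rw [integral_add hint1 hint2]
        _ = ∑ j ∈ insert i s, a j ^ 2 := by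
            rw [eA, eC, hT2', Finset.sum_insert hi]; ring
    -- fourth moment
    have hm4 : (∫ ω, (∑ j ∈ insert i s, a j * z j ω) ^ 4)
        = 3 * (∑ j ∈ insert i s, a j ^ 2) ^ 2
          + ∑ j ∈ insert i s, a j ^ 4 * ((∫ ω, (z j ω) ^ 4) - 3) := by
      have i0 : Integrable (fun ω => T ω ^ 4) ℙ := hTint 4 le_rfl
      have i1 : Integrable (fun ω => (4 * c) * (T ω ^ 3 * Z ω ^ 1)) ℙ :=
        (hint_mul 3 1 (by norm_num) (by norm_num)).const_mul _
      have i2 : Integrable (fun ω => (6 * c ^ 2) * (T ω ^ 2 * Z ω ^ 2)) ℙ :=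
        (hint_mul 2 2 (by norm_num) (by norm_num)).const_mul _
      have i3 : Integrable (fun ω => (4 * c ^ 3) * (T ω ^ 1 * Z ω ^ 3)) ℙ :=
        (hint_mul 1 3 (by norm_num) (by norm_num)).const_mul _
      have i4 : Integrable (fun ω => c ^ 4 * Z ω ^ 4) ℙ :=
        (hZint 4 le_rfl).const_mul _
      have i01 : Integrable (fun ω => T ω ^ 4 + (4 * c) * (T ω ^ 3 * Z ω ^ 1)) ℙ := i0.add i1
      have i012 : Integrable (fun ω => T ω ^ 4 + (4 * c) * (T ω ^ 3 * Z ω ^ 1)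
          + (6 * c ^ 2) * (T ω ^ 2 * Z ω ^ 2)) ℙ := i01.add i2
      have i0123 : Integrable (fun ω => T ω ^ 4 + (4 * c) * (T ω ^ 3 * Z ω ^ 1)
          + (6 * c ^ 2) * (T ω ^ 2 * Z ω ^ 2) + (4 * c ^ 3) * (T ω ^ 1 * Z ω ^ 3)) ℙ :=
        i012.add i3
      have eB : (∫ ω, (4 * c) * (T ω ^ 3 * Z ω ^ 1)) = 0 := by
        rw [integral_const_mul, hmul_int 3 1, hZ1', mul_zero, mul_zero]
      have eC : (∫ ω, (6 * c ^ 2) * (T ω ^ 2 * Z ω ^ 2))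
          = (6 * c ^ 2) * (∑ j ∈ s, a j ^ 2) := by
        rw [integral_const_mul, hmul_int 2 2, hZ2, mul_one, hT2']
      have eD : (∫ ω, (4 * c ^ 3) * (T ω ^ 1 * Z ω ^ 3)) = 0 := by
        rw [integral_const_mul, hmul_int 1 3, hT1', zero_mul, mul_zero]
      have eE : (∫ ω, c ^ 4 * Z ω ^ 4) = c ^ 4 * ∫ ω, Z ω ^ 4 := integral_const_mul _ _
      calc (∫ ω, (∑ j ∈ insert i s, a j * z j ω) ^ 4)
          = ∫ ω, (T ω ^ 4 + (4 * c) * (T ω ^ 3 * Z ω ^ 1)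
              + (6 * c ^ 2) * (T ω ^ 2 * Z ω ^ 2)
              + (4 * c ^ 3) * (T ω ^ 1 * Z ω ^ 3) + c ^ 4 * Z ω ^ 4) :=
            integral_congr_ae (Filter.Eventually.of_forall fun ω => by
              show (∑ j ∈ insert i s, a j * z j ω) ^ 4 = _
              rw [hsum_eq ω]; ring)
        _ = (∫ ω, (T ω ^ 4 + (4 * c) * (T ω ^ 3 * Z ω ^ 1)
              + (6 * c ^ 2) * (T ω ^ 2 * Z ω ^ 2)
              + (4 * c ^ 3) * (T ω ^ 1 * Z ω ^ 3))) + ∫ ω, c ^ 4 * Z ω ^ 4 :=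
            integral_add i0123 i4
        _ = ((∫ ω, (T ω ^ 4 + (4 * c) * (T ω ^ 3 * Z ω ^ 1)
              + (6 * c ^ 2) * (T ω ^ 2 * Z ω ^ 2)))
              + ∫ ω, (4 * c ^ 3) * (T ω ^ 1 * Z ω ^ 3)) + ∫ ω, c ^ 4 * Z ω ^ 4 := by
            rw [integral_add i012 i3]
        _ = (((∫ ω, (T ω ^ 4 + (4 * c) * (T ω ^ 3 * Z ω ^ 1)))
              + ∫ ω, (6 * c ^ 2) * (T ω ^ 2 * Z ω ^ 2))
              + ∫ ω, (4 * c ^ 3) * (T ω ^ 1 * Z ω ^ 3)) + ∫ ω, c ^ 4 * Z ω ^ 4 := by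
            rw [integral_add i01 i2]
        _ = ((((∫ ω, T ω ^ 4) + ∫ ω, (4 * c) * (T ω ^ 3 * Z ω ^ 1))
              + ∫ ω, (6 * c ^ 2) * (T ω ^ 2 * Z ω ^ 2))
              + ∫ ω, (4 * c ^ 3) * (T ω ^ 1 * Z ω ^ 3)) + ∫ ω, c ^ 4 * Z ω ^ 4 := by
            rw [integral_add i0 i1]
        _ = 3 * (∑ j ∈ insert i s, a j ^ 2) ^ 2
            + ∑ j ∈ insert i s, a j ^ 4 * ((∫ ω, (z j ω) ^ 4) - 3) := by
            rw [eB, eC, eD, eE, hT4', Finset.sum_insert hi, Finset.sum_insert hi]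
            simp only [hc, hZ]
            ring
    exact ⟨hm1, hm2, hm4⟩

end Aux

/-- For a random vector with independent standardized components and an orthogonal
matrix `U` with rows `u_k`, `∑ k |E((u_k'z)^4) - 3| ≤ ∑ i |κ_i|`. -/
theorem sum_abs_fourth_moment_le_sum_kurtosis
    {Ω : Type*} [MeasureSpace Ω] [IsProbabilityMeasure (ℙ : Measure Ω)]
    {p : ℕ} (z : Fin p → Ω → ℝ) (κ : Fin p → ℝ)
    (hmeas : ∀ i, Measurable (z i))
    (hindep : iIndepFun z ℙ)
    (hL4 : ∀ i, MemLp (z i) 4 ℙ)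
    (hmean : ∀ i, ∫ ω, z i ω = 0)
    (hvar : ∀ i, ∫ ω, (z i ω) ^ 2 = 1)
    (hκ : ∀ i, κ i = (∫ ω, (z i ω) ^ 4) - 3)
    (U : Matrix (Fin p) (Fin p) ℝ) (hU : U * Uᵀ = 1) :
    ∑ k, |(∫ ω, (∑ i, U k i * z i ω) ^ 4) - 3| ≤ ∑ i, |κ i| := by
  have hrow : ∀ k, (∑ i, U k i ^ 2) = 1 := by
    intro k
    have h := congrFun (congrFun hU k) k
    simpa [Matrix.mul_apply, Matrix.one_apply, Matrix.transpose_apply, pow_two] using h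
  have hcol : ∀ i, (∑ k, U k i ^ 2) = 1 := by
    intro i
    have hU' : Uᵀ * U = 1 := mul_eq_one_comm.mp hU
    have h := congrFun (congrFun hU' i) i
    simpa [Matrix.mul_apply, Matrix.one_apply, Matrix.transpose_apply, pow_two] using h
  have key : ∀ k, (∫ ω, (∑ i, U k i * z i ω) ^ 4) - 3 = ∑ i, U k i ^ 4 * κ i := by
    intro k
    obtain ⟨-, -, h4⟩ := aux_moments z (U k) hmeas hindep hL4 hmean hvar Finset.univ
    have : (∫ ω, (∑ i, U k i * z i ω) ^ 4)
        = 3 * (∑ i, U k i ^ 2) ^ 2 + ∑ i, U k i ^ 4 * ((∫ ω, (z i ω) ^ 4) - 3) := h4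
    rw [this, hrow k]
    have : ∀ i, U k i ^ 4 * ((∫ ω, (z i ω) ^ 4) - 3) = U k i ^ 4 * κ i := by
      intro i; rw [hκ i]
    rw [Finset.sum_congr rfl fun i _ => this i]
    ring
  calc ∑ k, |(∫ ω, (∑ i, U k i * z i ω) ^ 4) - 3|
      = ∑ k, |∑ i, U k i ^ 4 * κ i| := by
        refine Finset.sum_congr rfl fun k _ => ?_
        rw [key k]
    _ ≤ ∑ k, ∑ i, U k i ^ 2 * |κ i| := by
        refine Finset.sum_le_sum fun k _ => ?_
        calc |∑ i, U k i ^ 4 * κ i| ≤ ∑ i, |U k i ^ 4 * κ i| :=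
              Finset.abs_sum_le_sum_abs (fun i => U k i ^ 4 * κ i) Finset.univ
          _ ≤ ∑ i, U k i ^ 2 * |κ i| := by
              refine Finset.sum_le_sum fun i _ => ?_
              rw [abs_mul, abs_pow]
              have hle1 : U k i ^ 2 ≤ 1 := by
                rw [← hrow k]
                exact Finset.single_le_sum (f := fun j => U k j ^ 2) (fun j _ => sq_nonneg _) (Finset.mem_univ i)
              have h4le2 : |U k i| ^ 4 ≤ U k i ^ 2 := by
                have : |U k i| ^ 4 = (U k i ^ 2) ^ 2 := by
                  rw [← abs_pow]
                  rw [show ((U k i)^2)^2 = (U k i)^4 by ring, abs_of_nonneg (by positivity)]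
                rw [this]
                nlinarith [sq_nonneg (U k i)]
              exact mul_le_mul_of_nonneg_right h4le2 (abs_nonneg _) |>.trans
                (mul_le_mul_of_nonneg_right le_rfl (abs_nonneg _))
    _ = ∑ i, |κ i| := by
        rw [Finset.sum_comm]
        refine Finset.sum_congr rfl fun i _ => ?_
        rw [← Finset.sum_mul, hcol i, one_mul]
end

section
/- Let z be as above with independent standardized components and |κ_i| = max_j |κ_j| attained at a unique index i. If u is a unit vector with |E((u'z)^4) - 3| = max_j |κ_j| and κ_i ≠ 0, then u = ± e_i for an index i attaining the maximum, i.e., u_j^4 = 0 for all j with |κ_j| < max or u is a standard basis vector up to sign. -/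
open MeasureTheory ProbabilityTheory
open scoped ENNReal

section Aux

variable {Ω : Type*} [MeasureSpace Ω] [IsProbabilityMeasure (ℙ : Measure Ω)]

lemma aux_int_pow {f : Ω → ℝ} (hf : MemLp f 4 ℙ) {a : ℕ} (ha : a ≤ 4) :
    Integrable (fun ω => f ω ^ a) ℙ := by
  have h4 : Integrable (fun ω => ‖f ω‖ ^ ((4:ℝ≥0∞).toReal)) ℙ :=
    hf.integrable_norm_rpow (by norm_num) (by norm_num)
  refine Integrable.mono' ((integrable_const (1:ℝ)).add h4)
    ((hf.aestronglyMeasurable.aemeasurable.pow_const a).aestronglyMeasurable) ?_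
  filter_upwards with ω
  have hx : (0:ℝ) ≤ ‖f ω‖ := norm_nonneg _
  have h1 : ‖f ω ^ a‖ = ‖f ω‖ ^ a := norm_pow _ _
  have h2 : ‖f ω‖ ^ ((4:ℝ≥0∞).toReal) = ‖f ω‖ ^ (4:ℕ) := by
    rw [show ((4:ℝ≥0∞).toReal) = ((4:ℕ):ℝ) by norm_num, Real.rpow_natCast]
  simp only [Pi.add_apply, h1, h2]
  rcases le_total ‖f ω‖ 1 with h | h
  · have : ‖f ω‖ ^ a ≤ 1 := pow_le_one₀ hx h
    nlinarith [pow_nonneg hx 4]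
  · have : ‖f ω‖ ^ a ≤ ‖f ω‖ ^ 4 := pow_le_pow_right₀ h ha
    linarith

lemma aux_expand4 {S X : Ω → ℝ} (hS : MemLp S 4 ℙ) (hX : MemLp X 4 ℙ)
    (hind : IndepFun S X ℙ) (hmS : ∫ ω, S ω = 0) (hmX : ∫ ω, X ω = 0) :
    ((∫ ω, (S ω + X ω) ^ 2) = (∫ ω, S ω ^ 2) + ∫ ω, X ω ^ 2) ∧
    ((∫ ω, (S ω + X ω) ^ 4) =
      (∫ ω, S ω ^ 4) + 6 * (∫ ω, S ω ^ 2) * (∫ ω, X ω ^ 2) + ∫ ω, X ω ^ 4) := by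
  have Ia : ∀ a : ℕ, a ≤ 4 → Integrable (fun ω => S ω ^ a) ℙ := fun a ha => aux_int_pow hS ha
  have Ib : ∀ b : ℕ, b ≤ 4 → Integrable (fun ω => X ω ^ b) ℙ := fun b hb => aux_int_pow hX hb
  have hab : ∀ a b : ℕ, IndepFun (fun ω => S ω ^ a) (fun ω => X ω ^ b) ℙ :=
    fun a b => hind.comp (measurable_id.pow_const a) (measurable_id.pow_const b)
  have crossInt : ∀ a b : ℕ, a ≤ 4 → b ≤ 4 → Integrable (fun ω => S ω ^ a * X ω ^ b) ℙ := by
    intro a b ha hb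
    exact (hab a b).integrable_mul (Ia a ha) (Ib b hb)
  have cross : ∀ a b : ℕ, a ≤ 4 → b ≤ 4 →
      (∫ ω, S ω ^ a * X ω ^ b) = (∫ ω, S ω ^ a) * ∫ ω, X ω ^ b := by
    intro a b ha hb
    simpa using (hab a b).integral_mul_eq_mul_integral (Ia a ha).aestronglyMeasurable (Ib b hb).aestronglyMeasurable
  constructor
  · have e2 : (fun ω => (S ω + X ω) ^ 2)
        = fun ω => S ω ^ 2 + (2 * (S ω ^ 1 * X ω ^ 1) + X ω ^ 2) := by
      funext ω; ring
    have gb : Integrable (fun ω => 2 * (S ω ^ 1 * X ω ^ 1)) ℙ := by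
      exact (crossInt 1 1 (by norm_num) (by norm_num)).const_mul 2
    have g2 : Integrable (fun ω => 2 * (S ω ^ 1 * X ω ^ 1) + X ω ^ 2) ℙ := by
      exact gb.add (Ib 2 (by norm_num))
    rw [e2, integral_add (Ia 2 (by norm_num)) g2,
      integral_add gb (Ib 2 (by norm_num)),
      integral_const_mul, cross 1 1 (by norm_num) (by norm_num)]
    simp only [pow_one, hmS, hmX]
    ring
  · have e4 : (fun ω => (S ω + X ω) ^ 4)
        = fun ω => S ω ^ 4 + (4 * (S ω ^ 3 * X ω ^ 1) + (6 * (S ω ^ 2 * X ω ^ 2) +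
            (4 * (S ω ^ 1 * X ω ^ 3) + X ω ^ 4))) := by
      funext ω; ring
    have i31 := crossInt 3 1 (by norm_num) (by norm_num)
    have i22 := crossInt 2 2 (by norm_num) (by norm_num)
    have i13 := crossInt 1 3 (by norm_num) (by norm_num)
    have j13 : Integrable (fun ω => 4 * (S ω ^ 1 * X ω ^ 3)) ℙ := by exact i13.const_mul 4
    have j22 : Integrable (fun ω => 6 * (S ω ^ 2 * X ω ^ 2)) ℙ := by exact i22.const_mul 6
    have j31 : Integrable (fun ω => 4 * (S ω ^ 3 * X ω ^ 1)) ℙ := by exact i31.const_mul 4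
    have g1 : Integrable (fun ω => 4 * (S ω ^ 1 * X ω ^ 3) + X ω ^ 4) ℙ := by
      exact j13.add (Ib 4 le_rfl)
    have g2 : Integrable (fun ω => 6 * (S ω ^ 2 * X ω ^ 2) + (4 * (S ω ^ 1 * X ω ^ 3) + X ω ^ 4)) ℙ := by
      exact j22.add g1
    have g3 : Integrable (fun ω => 4 * (S ω ^ 3 * X ω ^ 1) + (6 * (S ω ^ 2 * X ω ^ 2) + (4 * (S ω ^ 1 * X ω ^ 3) + X ω ^ 4))) ℙ := by
      exact j31.add g2
    rw [e4, integral_add (Ia 4 le_rfl) g3,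
      integral_add j31 g2,
      integral_add j22 g1,
      integral_add j13 (Ib 4 le_rfl),
      integral_const_mul, integral_const_mul, integral_const_mul,
      cross 3 1 (by norm_num) (by norm_num), cross 2 2 (by norm_num) (by norm_num),
      cross 1 3 (by norm_num) (by norm_num)]
    simp only [pow_one, hmS, hmX]
    ring

lemma aux_sum_moments {p : ℕ} (X : Fin p → Ω → ℝ)
    (hmeas : ∀ i, Measurable (X i))
    (hindep : iIndepFun X ℙ)
    (hL4 : ∀ i, MemLp (X i) 4 ℙ)
    (hmean : ∀ i, ∫ ω, X i ω = 0) (s : Finset (Fin p)) :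
    ((∫ ω, (∑ j ∈ s, X j ω) ^ 2) = ∑ j ∈ s, ∫ ω, (X j ω) ^ 2) ∧
    ((∫ ω, (∑ j ∈ s, X j ω) ^ 4) = (∑ j ∈ s, ∫ ω, (X j ω) ^ 4)
      + 3 * ((∑ j ∈ s, ∫ ω, (X j ω) ^ 2) ^ 2 - ∑ j ∈ s, (∫ ω, (X j ω) ^ 2) ^ 2)) := by
  classical
  induction s using Finset.induction_on with
  | empty => simp
  | insert k s hk ih =>
    obtain ⟨ih2, ih4⟩ := ih
    have hSmem : MemLp (fun ω => ∑ j ∈ s, X j ω) 4 ℙ :=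
      memLp_finset_sum s (fun j _ => hL4 j)
    have hSmean : (∫ ω, ∑ j ∈ s, X j ω) = 0 := by
      rw [integral_finset_sum s (fun j _ => (hL4 j).integrable (by norm_num))]
      simp [hmean]
    have hind : IndepFun (fun ω => ∑ j ∈ s, X j ω) (X k) ℙ := by
      have := hindep.indepFun_finsetSum_of_notMem hmeas hk
      have he : (∑ j ∈ s, X j) = fun ω => ∑ j ∈ s, X j ω := by
        funext ω; simp [Finset.sum_apply]
      rwa [he] at this
    obtain ⟨h2, h4⟩ := aux_expand4 hSmem (hL4 k) hind hSmean (hmean k)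
    have hrw2 : (∫ ω, (∑ j ∈ insert k s, X j ω) ^ 2)
        = ∫ ω, ((∑ j ∈ s, X j ω) + X k ω) ^ 2 := by
      congr 1; funext ω; rw [Finset.sum_insert hk]; ring
    have hrw4 : (∫ ω, (∑ j ∈ insert k s, X j ω) ^ 4)
        = ∫ ω, ((∑ j ∈ s, X j ω) + X k ω) ^ 4 := by
      congr 1; funext ω; rw [Finset.sum_insert hk]; ring
    constructor
    · rw [hrw2, h2, ih2, Finset.sum_insert hk]; ring
    · rw [hrw4, h4, ih4, ih2, Finset.sum_insert hk, Finset.sum_insert hk,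
        Finset.sum_insert hk]
      ring

end Aux

/-- If the maximal absolute kurtosis is attained at a unique index `i` with `κ i ≠ 0`,
then a unit vector `u` achieving `|E((u'z)^4) - 3| = |κ i|` must be `± e_i`. -/
theorem maximizer_is_signed_basis_vector
    {Ω : Type*} [MeasureSpace Ω] [IsProbabilityMeasure (ℙ : Measure Ω)]
    {p : ℕ} (z : Fin p → Ω → ℝ) (κ : Fin p → ℝ)
    (hmeas : ∀ i, Measurable (z i))
    (hindep : iIndepFun z ℙ)
    (hL4 : ∀ i, MemLp (z i) 4 ℙ)
    (hmean : ∀ i, ∫ ω, z i ω = 0)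
    (hvar : ∀ i, ∫ ω, (z i ω) ^ 2 = 1)
    (hκ : ∀ i, κ i = (∫ ω, (z i ω) ^ 4) - 3)
    (i : Fin p) (hκi : κ i ≠ 0)
    (hmax : ∀ j, j ≠ i → |κ j| < |κ i|)
    (u : Fin p → ℝ) (hu : ∑ j, (u j) ^ 2 = 1)
    (heq : |(∫ ω, (∑ j, u j * z j ω) ^ 4) - 3| = |κ i|) :
    (∀ j, j ≠ i → u j = 0) ∧ (u i = 1 ∨ u i = -1) := by
  classical
  set X : Fin p → Ω → ℝ := fun j ω => u j * z j ω with hX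
  have hXmeas : ∀ j, Measurable (X j) := fun j => (hmeas j).const_mul (u j)
  have hXindep : iIndepFun X ℙ := by
    have := hindep.comp (fun j (x : ℝ) => u j * x) (fun j => measurable_id.const_mul (u j))
    exact this
  have hXL4 : ∀ j, MemLp (X j) 4 ℙ := fun j => (hL4 j).const_mul (u j)
  have hXmean : ∀ j, ∫ ω, X j ω = 0 := by
    intro j
    simp only [hX]
    rw [integral_const_mul, hmean j, mul_zero]
  have hm2 : ∀ j, (∫ ω, (X j ω) ^ 2) = u j ^ 2 := by
    intro j
    simp only [hX]
    have : (fun ω => (u j * z j ω) ^ 2) = fun ω => u j ^ 2 * z j ω ^ 2 := by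
      funext ω; ring
    rw [this, integral_const_mul, hvar j, mul_one]
  have hm4 : ∀ j, (∫ ω, (X j ω) ^ 4) = u j ^ 4 * (κ j + 3) := by
    intro j
    simp only [hX]
    have : (fun ω => (u j * z j ω) ^ 4) = fun ω => u j ^ 4 * z j ω ^ 4 := by
      funext ω; ring
    rw [this, integral_const_mul, hκ j]
    ring_nf
  obtain ⟨-, h4⟩ := aux_sum_moments X hXmeas hXindep hXL4 hXmean Finset.univ
  -- key identity
  have hkey : (∫ ω, (∑ j, u j * z j ω) ^ 4) - 3 = ∑ j, u j ^ 4 * κ j := by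
    have : (∫ ω, (∑ j, u j * z j ω) ^ 4) = ∫ ω, (∑ j, X j ω) ^ 4 := rfl
    rw [this, h4]
    simp only [hm2, hm4, hu]
    have h44 : ∀ j : Fin p, (u j ^ 2) ^ 2 = u j ^ 4 := by intro j; ring
    simp only [h44]
    rw [Finset.sum_congr rfl (fun j _ => by ring :
      ∀ j ∈ Finset.univ, u j ^ 4 * (κ j + 3) = u j ^ 4 * κ j + 3 * u j ^ 4),
      Finset.sum_add_distrib]
    rw [← Finset.mul_sum]
    ring
  rw [hkey] at heq
  -- algebraic finish
  set c := |κ i| with hc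
  have hcpos : 0 < c := abs_pos.2 hκi
  have h4nn : ∀ j : Fin p, 0 ≤ u j ^ 4 := fun j => by positivity
  have hT1 : c ≤ ∑ j, u j ^ 4 * |κ j| := by
    calc c = |∑ j, u j ^ 4 * κ j| := heq.symm
    _ ≤ ∑ j, |u j ^ 4 * κ j| := Finset.abs_sum_le_sum_abs _ _
    _ = ∑ j, u j ^ 4 * |κ j| := by
        refine Finset.sum_congr rfl fun j _ => ?_
        rw [abs_mul, abs_of_nonneg (h4nn j)]
  have hle1 : ∀ j : Fin p, u j ^ 2 ≤ 1 := by
    intro j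
    rw [← hu]
    exact Finset.single_le_sum (fun k _ => sq_nonneg (u k)) (Finset.mem_univ j)
  have hsum4 : ∑ j, u j ^ 4 ≤ 1 := by
    calc ∑ j, u j ^ 4 ≤ ∑ j, u j ^ 2 := by
          refine Finset.sum_le_sum fun j _ => ?_
          nlinarith [sq_nonneg (u j), hle1 j]
    _ = 1 := hu
  have habs : ∀ j : Fin p, |κ j| ≤ c := by
    intro j
    by_cases hj : j = i
    · subst hj; exact le_rfl
    · exact (hmax j hj).le
  have hT2 : (∑ j, u j ^ 4 * |κ j|) ≤ (∑ j, u j ^ 4) * c := by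
    rw [Finset.sum_mul]
    exact Finset.sum_le_sum fun j _ => mul_le_mul_of_nonneg_left (habs j) (h4nn j)
  have hT3 : (∑ j, u j ^ 4) * c ≤ c := by
    nlinarith
  have hzero : ∑ j, u j ^ 4 * (c - |κ j|) = 0 := by
    have : ∑ j, u j ^ 4 * (c - |κ j|) = (∑ j, u j ^ 4) * c - ∑ j, u j ^ 4 * |κ j| := by
      rw [Finset.sum_mul, ← Finset.sum_sub_distrib]
      exact Finset.sum_congr rfl fun j _ => by ring
    rw [this]
    linarith
  have heach := (Finset.sum_eq_zero_iff_of_nonneg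
    (fun j _ => mul_nonneg (h4nn j) (by linarith [habs j]))).1 hzero
  have hujz : ∀ j, j ≠ i → u j = 0 := by
    intro j hj
    have hj0 := heach j (Finset.mem_univ j)
    have hlt : 0 < c - |κ j| := by linarith [hmax j hj]
    have : u j ^ 4 = 0 := by
      rcases mul_eq_zero.1 hj0 with h | h
      · exact h
      · exact absurd h (by linarith)
    exact pow_eq_zero_iff (by norm_num) |>.1 this
  refine ⟨hujz, ?_⟩
  have hui : u i ^ 2 = 1 := by
    rw [← hu]
    rw [Finset.sum_eq_single i (fun j _ hj => by rw [hujz j hj]; ring) (by simp)]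
  have : (u i - 1) * (u i + 1) = 0 := by nlinarith
  rcases mul_eq_zero.1 this with h | h
  · left; linarith
  · right; linarith
end

section
/- Let z be a p-dimensional random vector with independent standardized components and kurtosis values κ_1, ..., κ_p, let U be an orthogonal matrix and set x_st = U'z. For an orthogonal matrix V, define D(V) = Σ_{i=1}^p Σ_{j=1}^p ‖diag(V C^{ij}(x_st) V')‖², where C^{ij}(x) = E[(x' E^{ij} x) x x'] - E^{ij} - E^{ji} - tr(E^{ij}) I_p. Then with G = VU', D(V) = Σ_{k=1}^p Σ_{l=1}^p g_{kl}^4 κ_l^2. -/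
open MeasureTheory ProbabilityTheory Matrix ENNReal

section Aux

variable {Ω : Type*} [MeasureSpace Ω] {p : ℕ}

lemma aux_int4 (z : Fin p → Ω → ℝ) (hL4 : ∀ i, MemLp (z i) 4 ℙ) (a b c d : Fin p) :
    Integrable (fun ω => z a ω * z b ω * z c ω * z d ω) ℙ := by
  have h2 : ∀ e f : Fin p, MemLp (fun ω => z e ω * z f ω) 2 ℙ := by
    intro e f
    have h := (hL4 f).smul (hL4 e) (r := 2) (hpqr := ⟨by simpa [one_div] using (show (1:ℝ≥0∞)/2 = 1/4 + 1/4 by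
      rw [ENNReal.div_add_div_same, ENNReal.div_eq_div_iff] <;> norm_num).symm⟩)
    exact h
  have h := (h2 c d).smul (h2 a b) (r := 1) (hpqr := ⟨by simpa [one_div] using (show (1:ℝ≥0∞)/1 = 1/2 + 1/2 by
      rw [ENNReal.div_add_div_same, ENNReal.div_eq_div_iff] <;> norm_num).symm⟩)
  rw [← memLp_one_iff_integrable]
  have he : (fun ω => z a ω * z b ω * z c ω * z d ω)
      = ((fun ω => z a ω * z b ω) * fun ω => z c ω * z d ω) := by
    funext ω; simp [Pi.mul_apply]; ring
  rw [he]
  simpa [Pi.smul_apply, smul_eq_mul] using h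

lemma aux_swap4 (z : Fin p → Ω → ℝ) (hL4 : ∀ i, MemLp (z i) 4 ℙ)
    (coef : Fin p → Fin p → Fin p → Fin p → ℝ) :
    ∫ ω, ∑ a, ∑ b, ∑ c, ∑ d, coef a b c d * (z a ω * z b ω * z c ω * z d ω)
      = ∑ a, ∑ b, ∑ c, ∑ d, coef a b c d * ∫ ω, z a ω * z b ω * z c ω * z d ω := by
  have hint : ∀ a b c d : Fin p,
      Integrable (fun ω => coef a b c d * (z a ω * z b ω * z c ω * z d ω)) ℙ :=
    fun a b c d => (aux_int4 z hL4 a b c d).const_mul _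
  rw [integral_finset_sum _ fun a _ => integrable_finset_sum _ fun b _ =>
    integrable_finset_sum _ fun c _ => integrable_finset_sum _ fun d _ => hint a b c d]
  refine Finset.sum_congr rfl fun a _ => ?_
  rw [integral_finset_sum _ fun b _ => integrable_finset_sum _ fun c _ =>
    integrable_finset_sum _ fun d _ => hint a b c d]
  refine Finset.sum_congr rfl fun b _ => ?_
  rw [integral_finset_sum _ fun c _ => integrable_finset_sum _ fun d _ => hint a b c d]
  refine Finset.sum_congr rfl fun c _ => ?_
  rw [integral_finset_sum _ fun d _ => hint a b c d]
  exact Finset.sum_congr rfl fun d _ => integral_const_mul _ _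

variable [IsProbabilityMeasure (ℙ : Measure Ω)]

lemma aux_integral_prod_pow (z : Fin p → Ω → ℝ)
    (hmeas : ∀ i, Measurable (z i))
    (hindep : iIndepFun z ℙ)
    (w : Fin p → ℕ) (s : Finset (Fin p)) :
    ∫ ω, ∏ i ∈ s, z i ω ^ w i = ∏ i ∈ s, ∫ ω, z i ω ^ w i := by
  classical
  induction s using Finset.induction_on with
  | empty => simp
  | insert _ _ hi ih =>
    rename_i a s
    have hgmeas : ∀ i, Measurable (fun ω => z i ω ^ w i) := fun i => (hmeas i).pow_const _
    have hgindep : iIndepFun (fun i ω => z i ω ^ w i) ℙ :=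
      hindep.comp (fun i (x : ℝ) => x ^ w i) (fun i => measurable_id.pow_const _)
    have hIndep : IndepFun (fun ω => z a ω ^ w a) (fun ω => ∏ i ∈ s, z i ω ^ w i) ℙ := by
      have h := hgindep.indepFun_finsetProd_of_notMem hgmeas hi
      have he : (∏ j ∈ s, fun ω => z j ω ^ w j) = fun ω => ∏ j ∈ s, z j ω ^ w j := by
        funext ω; simp
      rw [he] at h
      exact h.symm
    simp only [Finset.prod_insert hi]
    rw [IndepFun.integral_fun_mul_eq_mul_integral hIndep ((hgmeas a).aestronglyMeasurable)
      ((Finset.measurable_prod _ (fun i _ => hgmeas i)).aestronglyMeasurable), ih]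

lemma aux_mom4 (z : Fin p → Ω → ℝ) (κ : Fin p → ℝ)
    (hmeas : ∀ i, Measurable (z i))
    (hindep : iIndepFun z ℙ)
    (hmean : ∀ i, ∫ ω, z i ω = 0)
    (hvar : ∀ i, ∫ ω, (z i ω) ^ 2 = 1)
    (hκ : ∀ i, κ i = (∫ ω, (z i ω) ^ 4) - 3)
    (a b c d : Fin p) :
    ∫ ω, z a ω * z b ω * z c ω * z d ω
      = (if a = b then (1:ℝ) else 0) * (if c = d then (1:ℝ) else 0)
        + (if a = c then (1:ℝ) else 0) * (if b = d then (1:ℝ) else 0)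
        + (if a = d then (1:ℝ) else 0) * (if b = c then (1:ℝ) else 0)
        + (if a = b ∧ a = c ∧ a = d then κ a else 0) := by
  classical
  set w : Fin p → ℕ := fun i => (if a = i then 1 else 0) + (if b = i then 1 else 0)
      + (if c = i then 1 else 0) + (if d = i then 1 else 0) with hw
  have hpt : ∀ ω, z a ω * z b ω * z c ω * z d ω = ∏ i, z i ω ^ w i := by
    intro ω
    simp only [hw, pow_add, Finset.prod_mul_distrib, pow_ite, pow_one, pow_zero,
      Finset.prod_ite_eq, Finset.mem_univ, if_true]
  have h0 : ∀ i, (∫ ω, z i ω ^ 0) = 1 := by intro i; simp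
  have h1 : ∀ i, (∫ ω, z i ω ^ 1) = 0 := by
    intro i; simp only [pow_one]; exact hmean i
  have h4 : ∀ i, (∫ ω, z i ω ^ 4) = κ i + 3 := fun i => by have := hκ i; linarith
  have hmain : ∫ ω, z a ω * z b ω * z c ω * z d ω = ∏ i, ∫ ω, z i ω ^ w i := by
    rw [show (∫ ω, z a ω * z b ω * z c ω * z d ω) = ∫ ω, ∏ i, z i ω ^ w i by
      simp only [hpt]]
    exact aux_integral_prod_pow z hmeas hindep w Finset.univ
  rw [hmain]
  have hzero : ∀ e : Fin p, w e = 1 → (∏ i, ∫ ω, z i ω ^ w i) = 0 := by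
    intro e he
    exact Finset.prod_eq_zero (Finset.mem_univ e) (by rw [he]; exact h1 e)
  have hpair : ∀ e f : Fin p, e ≠ f → w e = 2 → w f = 2 →
      (∀ i, i ≠ e → i ≠ f → w i = 0) → (∏ i, ∫ ω, z i ω ^ w i) = 1 := by
    intro e f hef he hf hrest
    rw [← Finset.prod_subset (Finset.subset_univ ({e, f} : Finset (Fin p)))
      (fun x _ hx => by
        simp only [Finset.mem_insert, Finset.mem_singleton, not_or] at hx
        rw [hrest x hx.1 hx.2]; exact h0 x)]
    rw [Finset.prod_pair hef, he, hf, hvar e, hvar f]; norm_num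
  have hall : ∀ e, w e = 4 → (∀ i, i ≠ e → w i = 0) →
      (∏ i, ∫ ω, z i ω ^ w i) = κ e + 3 := by
    intro e he hrest
    rw [Finset.prod_eq_single e (fun x _ hx => by rw [hrest x hx]; exact h0 x)
      (by simp)]
    rw [he]; exact h4 e
  by_cases hab : a = b
  · subst hab
    by_cases hac : a = c
    · subst hac
      by_cases had : a = d
      · subst had
        rw [hall a (by simp [hw]) (fun i hi => by simp [hw, Ne.symm hi])]
        simp; ring
      · rw [hzero d (by simp [hw, had])]
        simp [had]
    · by_cases had : a = d
      · subst had
        rw [hzero c (by simp [hw, hac])]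
        simp [hac, Ne.symm hac]
      · by_cases hcd : c = d
        · subst hcd
          rw [hpair a c hac (by simp [hw, Ne.symm hac]) (by simp [hw, hac])
            (fun i hia hic => by simp [hw, Ne.symm hia, Ne.symm hic])]
          simp [hac]
        · rw [hzero c (by simp [hw, hac, Ne.symm hcd])]
          simp [hac, had, hcd]
  · by_cases hac : a = c
    · subst hac
      by_cases hbd : b = d
      · subst hbd
        rw [hpair a b hab (by simp [hw, Ne.symm hab]) (by simp [hw, hab])
          (fun i hia hib => by simp [hw, Ne.symm hia, Ne.symm hib])]
        simp [hab, Ne.symm hab]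
      · rw [hzero b (by simp [hw, hab, Ne.symm hbd])]
        simp [hab, Ne.symm hab, hbd]
    · by_cases had : a = d
      · subst had
        by_cases hbc : b = c
        · subst hbc
          rw [hpair a b hab (by simp [hw, Ne.symm hab]) (by simp [hw, hab])
            (fun i hia hib => by simp [hw, Ne.symm hia, Ne.symm hib])]
          simp [hab, Ne.symm hab]
        · rw [hzero b (by simp [hw, hab, Ne.symm hbc])]
          simp [hab, hac, hbc, Ne.symm hab]
      · rw [hzero a (by simp [hw, Ne.symm hab, Ne.symm hac, Ne.symm had])]
        simp [hab, hac, had]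

end Aux

lemma aux_sum4_expand {p : ℕ} (F G H E : Fin p → ℝ) :
    (∑ a, F a) * (∑ b, G b) * (∑ c, H c) * (∑ d, E d)
      = ∑ a, ∑ b, ∑ c, ∑ d, F a * G b * H c * E d := by
  rw [mul_assoc, Finset.sum_mul_sum Finset.univ Finset.univ F G,
    Finset.sum_mul_sum Finset.univ Finset.univ H E]
  rw [Finset.sum_mul_sum Finset.univ Finset.univ
    (fun a => ∑ b, F a * G b) (fun c => ∑ d, H c * E d)]
  refine Finset.sum_congr rfl fun a _ => ?_
  rw [Finset.sum_comm]
  refine Finset.sum_congr rfl fun b _ => ?_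
  rw [Finset.sum_mul]
  refine Finset.sum_congr rfl fun c _ => ?_
  rw [Finset.mul_sum]
  exact Finset.sum_congr rfl fun d _ => by ring

lemma aux_sum_sum_factor {p : ℕ} (f g : Fin p → ℝ) (r : ℝ) :
    ∑ i, ∑ j, r * f i * g j = r * (∑ i, f i) * (∑ j, g j) := by
  rw [mul_assoc, Finset.sum_mul_sum Finset.univ Finset.univ f g, Finset.mul_sum]
  refine Finset.sum_congr rfl fun i _ => ?_
  rw [Finset.mul_sum]
  exact Finset.sum_congr rfl fun j _ => by ring

lemma aux_collapse1 {p : ℕ} (f g h e : Fin p → ℝ) :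
    ∑ a, ∑ b, ∑ c, ∑ d, (f a * g b * h c * e d) *
      ((if a = b then (1:ℝ) else 0) * (if c = d then (1:ℝ) else 0))
    = (∑ a, f a * g a) * (∑ c, h c * e c) := by
  simp only [mul_ite, ite_mul, mul_one, mul_zero, zero_mul, one_mul,
    Finset.sum_ite_eq, Finset.sum_ite_irrel, Finset.sum_const_zero,
    Finset.mem_univ, if_true]
  rw [Finset.sum_mul_sum]
  exact Finset.sum_congr rfl fun a _ => Finset.sum_congr rfl fun b _ => by ring

lemma aux_collapse2 {p : ℕ} (f g h e : Fin p → ℝ) :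
    ∑ a, ∑ b, ∑ c, ∑ d, (f a * g b * h c * e d) *
      ((if a = c then (1:ℝ) else 0) * (if b = d then (1:ℝ) else 0))
    = (∑ a, f a * h a) * (∑ b, g b * e b) := by
  simp only [mul_ite, ite_mul, mul_one, mul_zero, zero_mul, one_mul,
    Finset.sum_ite_eq, Finset.sum_ite_irrel, Finset.sum_const_zero,
    Finset.mem_univ, if_true]
  rw [Finset.sum_mul_sum]
  exact Finset.sum_congr rfl fun a _ => Finset.sum_congr rfl fun b _ => by ring

lemma aux_collapse3 {p : ℕ} (f g h e : Fin p → ℝ) :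
    ∑ a, ∑ b, ∑ c, ∑ d, (f a * g b * h c * e d) *
      ((if a = d then (1:ℝ) else 0) * (if b = c then (1:ℝ) else 0))
    = (∑ a, f a * e a) * (∑ b, g b * h b) := by
  simp only [mul_ite, ite_mul, mul_one, mul_zero, zero_mul, one_mul,
    Finset.sum_ite_eq, Finset.sum_ite_irrel, Finset.sum_const_zero,
    Finset.mem_univ, if_true]
  rw [Finset.sum_mul_sum]
  exact Finset.sum_congr rfl fun a _ => Finset.sum_congr rfl fun b _ => by ring

lemma aux_collapse4 {p : ℕ} (κ : Fin p → ℝ) (f g h e : Fin p → ℝ) :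
    ∑ a, ∑ b, ∑ c, ∑ d, (f a * g b * h c * e d) *
      (if a = b ∧ a = c ∧ a = d then κ a else 0)
    = ∑ a, κ a * (f a * g a * h a * e a) := by
  simp only [mul_ite, ite_mul, mul_one, mul_zero, zero_mul, one_mul, ite_and,
    Finset.sum_ite_eq, Finset.sum_ite_irrel, Finset.sum_const_zero,
    Finset.mem_univ, if_true]
  exact Finset.sum_congr rfl fun a _ => by ring

lemma aux_triple_collect {p : ℕ} (r : Fin p → ℝ) (g h : Fin p → Fin p → ℝ) :
    ∑ d, ∑ c, ∑ a, r a * (g c a * h d a)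
      = ∑ a, r a * ((∑ c, g c a) * (∑ d, h d a)) := by
  calc ∑ d, ∑ c, ∑ a, r a * (g c a * h d a)
      = ∑ d, ∑ a, ∑ c, r a * (g c a * h d a) :=
        Finset.sum_congr rfl fun d _ => Finset.sum_comm
    _ = ∑ a, ∑ d, ∑ c, r a * (g c a * h d a) := Finset.sum_comm
    _ = ∑ a, r a * ((∑ c, g c a) * (∑ d, h d a)) := by
        refine Finset.sum_congr rfl fun a _ => ?_
        calc ∑ d, ∑ c, r a * (g c a * h d a)
            = ∑ d, (r a * h d a) * ∑ c, g c a := by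
              refine Finset.sum_congr rfl fun d _ => ?_
              rw [Finset.mul_sum]
              exact Finset.sum_congr rfl fun c _ => by ring
          _ = (∑ d, r a * h d a) * ∑ c, g c a := by rw [Finset.sum_mul]
          _ = (r a * ∑ d, h d a) * ∑ c, g c a := by rw [← Finset.mul_sum]
          _ = r a * ((∑ c, g c a) * (∑ d, h d a)) := by ring

lemma aux_s1 {p : ℕ} (M : Fin p → Fin p → Fin p → ℝ) :
    ∑ i, ∑ j, ∑ k, M i j k = ∑ k, ∑ i, ∑ j, M i j k := by
  calc ∑ i, ∑ j, ∑ k, M i j k = ∑ i, ∑ k, ∑ j, M i j k :=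
        Finset.sum_congr rfl fun i _ => Finset.sum_comm
    _ = ∑ k, ∑ i, ∑ j, M i j k := Finset.sum_comm

/-- The fourth cumulant matrix functional
`C(x, A) = E[(x'Ax) x x'] - A - A' - tr(A) I_p`. -/
noncomputable def cumulantMatrix {Ω : Type*} [MeasureSpace Ω] {p : ℕ}
    (x : Ω → Fin p → ℝ) (A : Matrix (Fin p) (Fin p) ℝ) : Matrix (Fin p) (Fin p) ℝ :=
  (Matrix.of fun k l => ∫ ω, (x ω ⬝ᵥ A.mulVec (x ω)) * x ω k * x ω l)
    - A - Aᵀ - A.trace • (1 : Matrix (Fin p) (Fin p) ℝ)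

/-- The JADE criterion evaluated at an orthogonal matrix `V`, for `x_st = U'z` with
`z` having independent standardized components, equals `∑ k l, g_{kl}^4 κ_l^2`
where `G = V U'`. -/
theorem jade_criterion_eq
    {Ω : Type*} [MeasureSpace Ω] [IsProbabilityMeasure (ℙ : Measure Ω)]
    {p : ℕ} (z : Fin p → Ω → ℝ) (κ : Fin p → ℝ)
    (hmeas : ∀ i, Measurable (z i))
    (hindep : iIndepFun z ℙ)
    (hL4 : ∀ i, MemLp (z i) 4 ℙ)
    (hmean : ∀ i, ∫ ω, z i ω = 0)
    (hvar : ∀ i, ∫ ω, (z i ω) ^ 2 = 1)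
    (hκ : ∀ i, κ i = (∫ ω, (z i ω) ^ 4) - 3)
    (U : Matrix (Fin p) (Fin p) ℝ) (hU : U * Uᵀ = 1)
    (V : Matrix (Fin p) (Fin p) ℝ) (hV : V * Vᵀ = 1)
    (xst : Ω → Fin p → ℝ) (hxst : ∀ ω, xst ω = Uᵀ.mulVec fun i => z i ω) :
    ∑ i, ∑ j, ∑ k,
        ((V * cumulantMatrix xst (Matrix.single i j 1) * Vᵀ) k k) ^ 2
      = ∑ k, ∑ l, ((V * Uᵀ) k l) ^ 4 * (κ l) ^ 2 := by
  classical
  set B : Matrix (Fin p) (Fin p) ℝ := Uᵀ with hB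
  have hBBT : ∀ m n, (∑ a, B m a * B n a) = if m = n then (1:ℝ) else 0 := by
    intro m n
    have h : Uᵀ * U = 1 := mul_eq_one_comm.mp hU
    have h2 : (Uᵀ * U) m n = (1 : Matrix (Fin p) (Fin p) ℝ) m n := by rw [h]
    simpa [Matrix.mul_apply, hB, Matrix.transpose_apply, Matrix.one_apply] using h2
  have hBTB : ∀ a b, (∑ m, B m a * B m b) = if a = b then (1:ℝ) else 0 := by
    intro a b
    have h2 : (U * Uᵀ) a b = (1 : Matrix (Fin p) (Fin p) ℝ) a b := by rw [hU]
    simpa [Matrix.mul_apply, hB, Matrix.transpose_apply, Matrix.one_apply,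
      mul_comm] using h2
  have hxval : ∀ ω m, xst ω m = ∑ a, B m a * z a ω := by
    intro ω m; rw [hxst]; simp [Matrix.mulVec, dotProduct, hB]
  have hand : ∀ (P Q : Prop) (_ : Decidable P) (_ : Decidable Q),
      (if P ∧ Q then (1:ℝ) else 0) = (if P then (1:ℝ) else 0) * (if Q then (1:ℝ) else 0) := by
    intro P Q _ _
    by_cases hP : P <;> by_cases hQ : Q <;> simp [hP, hQ]
  have hentry : ∀ i j k l : Fin p, cumulantMatrix xst (Matrix.single i j 1) k l
      = ∑ a, κ a * (B i a * B j a * B k a * B l a) := by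
    intro i j k l
    have hCapply : cumulantMatrix xst (Matrix.single i j 1) k l
        = (∫ ω, (xst ω ⬝ᵥ (Matrix.single i j (1:ℝ)).mulVec (xst ω)) * xst ω k * xst ω l)
          - (if i = k ∧ j = l then 1 else 0) - (if i = l ∧ j = k then 1 else 0)
          - (if i = j then (1:ℝ) else 0) * (if k = l then 1 else 0) := by
      have htr : (Matrix.single i j (1:ℝ)).trace = if i = j then 1 else 0 := by
        simp [Matrix.trace, Matrix.diag, Matrix.single, ite_and, Finset.sum_ite_eq, eq_comm]
      have hsb : ∀ a b : Fin p, Matrix.single i j (1:ℝ) a b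
          = if i = a ∧ j = b then 1 else 0 := fun a b => rfl
      simp only [cumulantMatrix, Matrix.sub_apply, Matrix.smul_apply, Matrix.of_apply,
        smul_eq_mul, Matrix.transpose_apply, Matrix.one_apply, htr, hsb, mul_ite,
        mul_one, mul_zero]
    have hpt : ∀ ω, (xst ω ⬝ᵥ (Matrix.single i j (1:ℝ)).mulVec (xst ω)) * xst ω k * xst ω l
        = ∑ a, ∑ b, ∑ c, ∑ d, (B i a * B j b * B k c * B l d)
            * (z a ω * z b ω * z c ω * z d ω) := by
      intro ω
      have h1 : (xst ω ⬝ᵥ (Matrix.single i j (1:ℝ)).mulVec (xst ω)) = xst ω i * xst ω j := by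
        simp [dotProduct, Matrix.mulVec, Matrix.single, ite_and, mul_ite,
          Finset.sum_ite_eq, Finset.sum_ite_irrel, Finset.sum_const_zero]
      rw [h1, hxval ω i, hxval ω j, hxval ω k, hxval ω l, aux_sum4_expand]
      exact Finset.sum_congr rfl fun a _ => Finset.sum_congr rfl fun b _ =>
        Finset.sum_congr rfl fun c _ => Finset.sum_congr rfl fun d _ => by ring
    have hint : (∫ ω, (xst ω ⬝ᵥ (Matrix.single i j (1:ℝ)).mulVec (xst ω)) * xst ω k * xst ω l)
        = ∑ a, ∑ b, ∑ c, ∑ d, (B i a * B j b * B k c * B l d)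
            * ∫ ω, z a ω * z b ω * z c ω * z d ω := by
      rw [show (∫ ω, (xst ω ⬝ᵥ (Matrix.single i j (1:ℝ)).mulVec (xst ω)) * xst ω k * xst ω l)
          = ∫ ω, ∑ a, ∑ b, ∑ c, ∑ d, (B i a * B j b * B k c * B l d)
              * (z a ω * z b ω * z c ω * z d ω) by simp only [hpt]]
      exact aux_swap4 z hL4 _
    rw [hCapply, hint]
    simp only [aux_mom4 z κ hmeas hindep hmean hvar hκ]
    simp only [mul_add, Finset.sum_add_distrib]
    rw [aux_collapse1 (B i) (B j) (B k) (B l), aux_collapse2 (B i) (B j) (B k) (B l),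
      aux_collapse3 (B i) (B j) (B k) (B l), aux_collapse4 κ (B i) (B j) (B k) (B l),
      hBBT i j, hBBT k l, hBBT i k, hBBT j l, hBBT i l, hBBT j k,
      hand (i = k) (j = l) _ _, hand (i = l) (j = k) _ _]
    ring
  have hVCV : ∀ i j k : Fin p, (V * cumulantMatrix xst (Matrix.single i j 1) * Vᵀ) k k
      = ∑ a, κ a * B i a * B j a * ((V * B) k a) ^ 2 := by
    intro i j k
    have expand : (V * cumulantMatrix xst (Matrix.single i j 1) * Vᵀ) k k
        = ∑ d, (∑ c, V k c * cumulantMatrix xst (Matrix.single i j 1) c d) * V k d := by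
      simp [Matrix.mul_apply, Matrix.transpose_apply]
    rw [expand]
    calc ∑ d, (∑ c, V k c * cumulantMatrix xst (Matrix.single i j 1) c d) * V k d
        = ∑ d, ∑ c, ∑ a, (κ a * B i a * B j a) * ((V k c * B c a) * (V k d * B d a)) := by
          refine Finset.sum_congr rfl fun d _ => ?_
          rw [Finset.sum_mul]
          refine Finset.sum_congr rfl fun c _ => ?_
          rw [hentry i j c d, Finset.mul_sum, Finset.sum_mul]
          exact Finset.sum_congr rfl fun a _ => by ring
      _ = ∑ a, (κ a * B i a * B j a) * ((∑ c, V k c * B c a) * (∑ d, V k d * B d a)) :=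
          aux_triple_collect _ _ _
      _ = ∑ a, κ a * B i a * B j a * ((V * B) k a) ^ 2 := by
          refine Finset.sum_congr rfl fun a _ => ?_
          rw [Matrix.mul_apply]
          ring
  simp only [hVCV]
  have hsq : ∀ i j k : Fin p, (∑ a, κ a * B i a * B j a * ((V * B) k a) ^ 2) ^ 2
      = ∑ a, ∑ b, (κ a * B i a * B j a * ((V * B) k a) ^ 2)
          * (κ b * B i b * B j b * ((V * B) k b) ^ 2) := by
    intro i j k; rw [pow_two, Finset.sum_mul_sum]
  simp only [hsq]
  rw [aux_s1 (fun i j k => ∑ a, ∑ b, (κ a * B i a * B j a * ((V * B) k a) ^ 2)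
      * (κ b * B i b * B j b * ((V * B) k b) ^ 2))]
  refine Finset.sum_congr rfl fun k _ => ?_
  rw [aux_s1 (fun i j a => ∑ b, (κ a * B i a * B j a * ((V * B) k a) ^ 2)
      * (κ b * B i b * B j b * ((V * B) k b) ^ 2))]
  refine Eq.trans (Finset.sum_congr rfl fun a _ => aux_s1 (fun i j b =>
      (κ a * B i a * B j a * ((V * B) k a) ^ 2)
        * (κ b * B i b * B j b * ((V * B) k b) ^ 2))) ?_
  calc ∑ a, ∑ b, ∑ i, ∑ j, (κ a * B i a * B j a * ((V * B) k a) ^ 2)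
          * (κ b * B i b * B j b * ((V * B) k b) ^ 2)
      = ∑ a, ∑ b, (κ a * κ b * ((V * B) k a) ^ 2 * ((V * B) k b) ^ 2)
          * (∑ i, B i a * B i b) * (∑ j, B j a * B j b) := by
        refine Finset.sum_congr rfl fun a _ => Finset.sum_congr rfl fun b _ => ?_
        rw [← aux_sum_sum_factor]
        exact Finset.sum_congr rfl fun i _ => Finset.sum_congr rfl fun j _ => by ring
    _ = ∑ a, ∑ b, (κ a * κ b * ((V * B) k a) ^ 2 * ((V * B) k b) ^ 2)
          * (if a = b then (1:ℝ) else 0) := by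
        simp only [hBTB]
        refine Finset.sum_congr rfl fun a _ => Finset.sum_congr rfl fun b _ => ?_
        by_cases h : a = b <;> simp [h]
    _ = ∑ l, ((V * B) k l) ^ 4 * (κ l) ^ 2 := by
        simp only [mul_ite, mul_one, mul_zero, Finset.sum_ite_eq, Finset.mem_univ, if_true]
        exact Finset.sum_congr rfl fun a _ => by ring
end

section
/- Under the assumptions of the previous statement, the JADE criterion D(V) = Σ_{i,j} ‖diag(V C^{ij}(U'z) V')‖² over orthogonal V is maximized by V = PJU for any permutation matrix P and sign-change matrix J, and the maximum value equals Σ_{l=1}^p κ_l^2. -/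
open MeasureTheory ProbabilityTheory Matrix

lemma jade_trace_sq {p : ℕ} (M : Matrix (Fin p) (Fin p) ℝ) :
    (M * Mᵀ).trace = ∑ i, ∑ j, (M i j)^2 := by
  simp [Matrix.trace, Matrix.diag, Matrix.mul_apply, Matrix.transpose_apply, sq]

lemma jade_trace_trick {p : ℕ} (U : Matrix (Fin p) (Fin p) ℝ) (hU : U * Uᵀ = 1) (t : Fin p → ℝ) :
    ∑ i, ∑ j, ((Uᵀ * Matrix.diagonal t * U) i j)^2 = ∑ a, (t a)^2 := by
  rw [← jade_trace_sq]
  have h2 : (Uᵀ * Matrix.diagonal t * U)ᵀ = Uᵀ * Matrix.diagonal t * U := by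
    simp [Matrix.transpose_mul, Matrix.diagonal_transpose, Matrix.mul_assoc]
  rw [h2]
  have h3 : (Uᵀ * Matrix.diagonal t * U) * (Uᵀ * Matrix.diagonal t * U)
      = Uᵀ * (Matrix.diagonal t * Matrix.diagonal t) * U := by
    simp only [Matrix.mul_assoc]
    rw [← Matrix.mul_assoc U Uᵀ, hU, Matrix.one_mul]
  rw [h3, Matrix.trace_mul_comm, ← Matrix.mul_assoc, ← Matrix.mul_assoc, hU, Matrix.one_mul,
    Matrix.diagonal_mul_diagonal]
  simp [Matrix.trace_diagonal, sq]

lemma jade_quadform_eq {p : ℕ} (U A : Matrix (Fin p) (Fin p) ℝ) (v : Fin p → ℝ) :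
    Uᵀ.mulVec v ⬝ᵥ A.mulVec (Uᵀ.mulVec v) = v ⬝ᵥ (U * A * Uᵀ).mulVec v := by
  rw [Matrix.mulVec_transpose, Matrix.dotProduct_mulVec, Matrix.vecMul_vecMul,
    Matrix.dotProduct_mulVec, ← Matrix.vecMul_vecMul (N := Uᵀ), Matrix.vecMul_transpose,
    dotProduct_comm (U *ᵥ _) v, Matrix.dotProduct_mulVec, dotProduct_comm]

lemma jade_sum4_pair1 {p : ℕ} (f : Fin p → Fin p → Fin p → Fin p → ℝ) :
    ∑ d, ∑ c, ∑ a, ∑ b, f a b c d * ((if a = b then (1:ℝ) else 0) * (if c = d then 1 else 0))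
      = ∑ d, ∑ a, f a a d d := by
  refine Finset.sum_congr rfl fun d _ => ?_
  rw [Finset.sum_comm]
  simp [mul_ite, Finset.sum_ite_eq, Finset.sum_ite_eq']

lemma jade_sum4_pair2 {p : ℕ} (f : Fin p → Fin p → Fin p → Fin p → ℝ) :
    ∑ d, ∑ c, ∑ a, ∑ b, f a b c d * ((if a = c then (1:ℝ) else 0) * (if b = d then 1 else 0))
      = ∑ d, ∑ c, f c d c d := by
  refine Finset.sum_congr rfl fun d _ => Finset.sum_congr rfl fun c _ => ?_
  simp [mul_ite, Finset.sum_ite_eq, Finset.sum_ite_eq']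

lemma jade_sum4_pair3 {p : ℕ} (f : Fin p → Fin p → Fin p → Fin p → ℝ) :
    ∑ d, ∑ c, ∑ a, ∑ b, f a b c d * ((if a = d then (1:ℝ) else 0) * (if b = c then 1 else 0))
      = ∑ d, ∑ c, f d c c d := by
  refine Finset.sum_congr rfl fun d _ => Finset.sum_congr rfl fun c _ => ?_
  simp [mul_ite, Finset.sum_ite_eq, Finset.sum_ite_eq']

lemma jade_sum4_diag {p : ℕ} (f : Fin p → Fin p → Fin p → Fin p → ℝ) (w : Fin p → ℝ) :
    ∑ d, ∑ c, ∑ a, ∑ b, f a b c d * (if a = b ∧ a = c ∧ a = d then w a else 0)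
      = ∑ a, f a a a a * w a := by
  simp only [ite_and, mul_ite, mul_zero]
  simp [Finset.sum_ite_eq, Finset.sum_ite_eq']

section Probabilistic

variable {Ω : Type*} [MeasureSpace Ω] [IsProbabilityMeasure (ℙ : Measure Ω)]
    {p : ℕ} (z : Fin p → Ω → ℝ) (κ : Fin p → ℝ)

lemma jade_M4
    (hmeas : ∀ i, Measurable (z i))
    (hindep : iIndepFun z ℙ)
    (hmean : ∀ i, ∫ ω, z i ω = 0)
    (hvar : ∀ i, ∫ ω, (z i ω) ^ 2 = 1)
    (hκ : ∀ i, κ i = (∫ ω, (z i ω) ^ 4) - 3) (a b c d : Fin p) :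
    ∫ ω, z a ω * z b ω * z c ω * z d ω =
      (if a = b then (1:ℝ) else 0) * (if c = d then 1 else 0)
      + (if a = c then 1 else 0) * (if b = d then 1 else 0)
      + (if a = d then 1 else 0) * (if b = c then 1 else 0)
      + (if a = b ∧ a = c ∧ a = d then κ a else 0) := by
  have aesm : ∀ (i : Fin p) (n : ℕ), AEStronglyMeasurable (fun ω => z i ω ^ n) ℙ :=
    fun i n => ((hmeas i).pow_const n).aestronglyMeasurable
  -- product of two powers of distinct coordinates
  have hmul : ∀ (a b : Fin p) (m n : ℕ), a ≠ b →
      ∫ ω, z a ω ^ m * z b ω ^ n = (∫ ω, z a ω ^ m) * ∫ ω, z b ω ^ n := by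
    intro a b m n hab
    have h : IndepFun (fun ω => z a ω ^ m) (fun ω => z b ω ^ n) ℙ :=
      (hindep.indepFun hab).comp (measurable_id.pow_const m) (measurable_id.pow_const n)
    exact h.integral_mul_eq_mul_integral (aesm a m) (aesm b n)
  -- z_a^2 z_b z_c with a,b,c pairwise distinct
  have h3 : ∀ (a b c : Fin p), a ≠ b → a ≠ c → b ≠ c →
      ∫ ω, z a ω ^ 2 * z b ω * z c ω = 0 := by
    intro a b c hab hac hbc
    classical
    set n : Fin p → ℕ := fun i => if i = a then 2 else 1 with hn
    have hf : iIndepFun (fun i ω => z i ω ^ n i) ℙ :=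
      hindep.comp (fun i x => x ^ n i) (fun i => measurable_id.pow_const (n i))
    have hfm : ∀ i, Measurable fun ω => z i ω ^ n i := fun i => (hmeas i).pow_const _
    have h := (hf.indepFun_mul_left hfm a b c hac hbc).integral_mul_eq_mul_integral
      (((hfm a).mul (hfm b)).aestronglyMeasurable) ((hfm c).aestronglyMeasurable)
    simp only [hn, if_pos rfl, if_neg hab.symm, if_neg hac.symm, if_neg hbc.symm, pow_one,
      Pi.mul_apply] at h
    rw [h, hmean c, mul_zero]
  -- all distinct
  have h4 : ∀ (a b c d : Fin p), a ≠ b → a ≠ c → a ≠ d → b ≠ c → b ≠ d → c ≠ d →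
      ∫ ω, z a ω * z b ω * z c ω * z d ω = 0 := by
    intro a b c d hab hac had hbc hbd hcd
    have h := (hindep.indepFun_mul_mul hmeas a b c d hac had hbc hbd).integral_mul_eq_mul_integral
      (((hmeas a).mul (hmeas b)).aestronglyMeasurable)
      (((hmeas c).mul (hmeas d)).aestronglyMeasurable)
    have e2 : integral ℙ (z a * z b) = 0 := by
      have h2 := hmul a b 1 1 hab
      simp only [pow_one] at h2
      calc integral ℙ (z a * z b) = ∫ ω, z a ω * z b ω := rfl
        _ = 0 := by rw [h2, hmean a, zero_mul]
    rw [show (fun ω => z a ω * z b ω * z c ω * z d ω)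
        = fun ω => (z a ω * z b ω) * (z c ω * z d ω) from funext fun ω => by ring]
    simp only [Pi.mul_apply] at h
    rw [h, (show (∫ x, z a x * z b x) = 0 from e2), zero_mul]
  have e31 : ∀ (u v : Fin p), u ≠ v → ∫ ω, z u ω ^ 3 * z v ω ^ 1 = 0 := by
    intro u v huv
    rw [hmul u v 3 1 huv]
    simp only [pow_one]
    rw [hmean v, mul_zero]
  have hz4 : ∀ i, ∫ ω, z i ω ^ 4 = κ i + 3 := fun i => by have := hκ i; linarith
  -- now case analysis
  have icongr : ∀ (f g : Ω → ℝ), (∀ ω, f ω = g ω) → ∫ ω, f ω = ∫ ω, g ω :=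
    fun f g h => by rw [funext h]
  by_cases hab : a = b
  · subst hab
    by_cases hac : a = c
    · subst hac
      by_cases had : a = d
      · subst had
        rw [icongr _ (fun ω => z a ω ^ 4) (fun ω => by ring), hz4]
        simp; ring
      · rw [icongr _ (fun ω => z a ω ^ 3 * z d ω ^ 1) (fun ω => by ring), e31 a d had]
        simp [had]
    · by_cases had : a = d
      · subst had
        rw [icongr _ (fun ω => z a ω ^ 3 * z c ω ^ 1) (fun ω => by ring), e31 a c hac]
        simp [hac, Ne.symm hac]
      · by_cases hcd : c = d
        · subst hcd
          rw [icongr _ (fun ω => z a ω ^ 2 * z c ω ^ 2) (fun ω => by ring), hmul a c 2 2 hac,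
            hvar a, hvar c]
          simp [hac, had]
        · rw [icongr _ (fun ω => z a ω ^ 2 * z c ω * z d ω) (fun ω => by ring),
            h3 a c d hac had hcd]
          simp [hac, had, hcd]
  · by_cases hac : a = c
    · subst hac
      by_cases hbd : b = d
      · subst hbd
        rw [icongr _ (fun ω => z a ω ^ 2 * z b ω ^ 2) (fun ω => by ring), hmul a b 2 2 hab,
          hvar a, hvar b]
        simp [hab, Ne.symm hab]
      · by_cases had : a = d
        · subst had
          rw [icongr _ (fun ω => z a ω ^ 3 * z b ω ^ 1) (fun ω => by ring), e31 a b hab]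
          simp [hab, hbd, Ne.symm hab]
        · rw [icongr _ (fun ω => z a ω ^ 2 * z b ω * z d ω) (fun ω => by ring),
            h3 a b d hab had hbd]
          simp [hab, hbd, had]
    · by_cases had : a = d
      · subst had
        by_cases hbc : b = c
        · subst hbc
          rw [icongr _ (fun ω => z a ω ^ 2 * z b ω ^ 2) (fun ω => by ring), hmul a b 2 2 hab,
            hvar a, hvar b]
          simp [hab, hac, Ne.symm hab]
        · rw [icongr _ (fun ω => z a ω ^ 2 * z b ω * z c ω) (fun ω => by ring),
            h3 a b c hab hac hbc]
          simp [hab, hac, hbc]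
      · by_cases hbc : b = c
        · subst hbc
          by_cases hbd : b = d
          · subst hbd
            rw [icongr _ (fun ω => z b ω ^ 3 * z a ω ^ 1) (fun ω => by ring),
              e31 b a (fun h => hab h.symm)]
            simp [hab, hac, had]
          · rw [icongr _ (fun ω => z b ω ^ 2 * z a ω * z d ω) (fun ω => by ring),
              h3 b a d (fun h => hab h.symm) hbd had]
            simp [hab, hac, had, hbd]
        · by_cases hbd : b = d
          · subst hbd
            rw [icongr _ (fun ω => z b ω ^ 2 * z a ω * z c ω) (fun ω => by ring),
              h3 b a c (fun h => hab h.symm) hbc hac]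
            simp [hab, hac, had, hbc]
          · by_cases hcd : c = d
            · subst hcd
              rw [icongr _ (fun ω => z c ω ^ 2 * z a ω * z b ω) (fun ω => by ring),
                h3 c a b (fun h => hac h.symm) (fun h => hbc h.symm) hab]
              simp [hab, hac, had, hbc, hbd]
            · rw [h4 a b c d hab hac had hbc hbd hcd]
              simp [hab, hac, had, hbc, hbd, hcd]

lemma jade_integrable4 (hmeas : ∀ i, Measurable (z i)) (hL4 : ∀ i, MemLp (z i) 4 ℙ)
    (a b c d : Fin p) :
    Integrable (fun ω => z a ω * z b ω * z c ω * z d ω) ℙ := by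
  have h2 : ∀ u v : Fin p, MemLp (fun ω => z u ω * z v ω) 2 ℙ := by
    intro u v
    have h := (hL4 v).smul (hL4 u) (p := 4) (q := 4) (r := 2)
      (hpqr := ⟨by rw [← two_mul, show (4:ENNReal) = 2 * 2 by norm_num, ENNReal.mul_inv (by simp) (by simp), ← mul_assoc, ENNReal.mul_inv_cancel (by simp) (by simp), one_mul]⟩)
    exact h
  have h := (h2 c d).smul (h2 a b) (p := 2) (q := 2) (r := 1)
    (hpqr := ⟨by rw [ENNReal.inv_two_add_inv_two, inv_one]⟩)
  rw [show (fun ω => z a ω * z b ω * z c ω * z d ω)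
      = (fun ω => (z a ω * z b ω) * (z c ω * z d ω)) from funext fun ω => by ring]
  exact memLp_one_iff_integrable.mp h

lemma jade_cum
    (hmeas : ∀ i, Measurable (z i))
    (hindep : iIndepFun z ℙ)
    (hL4 : ∀ i, MemLp (z i) 4 ℙ)
    (hmean : ∀ i, ∫ ω, z i ω = 0)
    (hvar : ∀ i, ∫ ω, (z i ω) ^ 2 = 1)
    (hκ : ∀ i, κ i = (∫ ω, (z i ω) ^ 4) - 3)
    (U : Matrix (Fin p) (Fin p) ℝ) (hU : U * Uᵀ = 1)
    (xst : Ω → Fin p → ℝ) (hxst : ∀ ω, xst ω = Uᵀ.mulVec fun i => z i ω)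
    (A : Matrix (Fin p) (Fin p) ℝ) :
    cumulantMatrix xst A
      = Uᵀ * Matrix.diagonal (fun a => κ a * (U * A * Uᵀ) a a) * U := by
  classical
  have hU' : Uᵀ * U = 1 := mul_eq_one_comm.mp hU
  set B := U * A * Uᵀ with hBdef
  have hBA : Uᵀ * B * U = A := by
    rw [hBdef]
    calc Uᵀ * (U * A * Uᵀ) * U = (Uᵀ * U) * A * (Uᵀ * U) := by
          simp only [Matrix.mul_assoc]
      _ = A := by rw [hU', Matrix.one_mul, Matrix.mul_one]
  have htrB : B.trace = A.trace := by
    rw [hBdef, Matrix.trace_mul_comm, ← Matrix.mul_assoc, hU', Matrix.one_mul]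
  have hUU : ∀ k l : Fin p, ∑ c, Uᵀ k c * Uᵀ l c = if k = l then (1:ℝ) else 0 := by
    intro k l
    have h := congrFun (congrFun hU' k) l
    rw [Matrix.mul_apply] at h
    rw [Matrix.one_apply] at h
    rw [← h]
    exact Finset.sum_congr rfl fun c _ => by simp [Matrix.transpose_apply]
  -- key integral computation
  have key : ∀ k l : Fin p, ∫ ω, (xst ω ⬝ᵥ A.mulVec (xst ω)) * xst ω k * xst ω l
      = A.trace * (if k = l then 1 else 0) + A k l + A l k
        + ∑ a, Uᵀ k a * (κ a * B a a) * U a l := by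
    intro k l
    have hint : (fun ω => (xst ω ⬝ᵥ A.mulVec (xst ω)) * xst ω k * xst ω l)
        = fun ω => ∑ d, ∑ c, ∑ a, ∑ b,
            (B a b * (Uᵀ k c * Uᵀ l d)) * (z a ω * z b ω * z c ω * z d ω) := by
      funext ω
      rw [hxst ω, jade_quadform_eq, ← hBdef]
      simp only [dotProduct, Matrix.mulVec, Finset.sum_mul, Finset.mul_sum]
      refine Finset.sum_congr rfl fun d _ => ?_
      refine Finset.sum_congr rfl fun c _ => ?_
      refine Finset.sum_congr rfl fun a _ => ?_
      refine Finset.sum_congr rfl fun b _ => ?_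
      ring
    have HI : ∀ (cf : ℝ) (a b c d : Fin p),
        Integrable (fun ω => cf * (z a ω * z b ω * z c ω * z d ω)) ℙ :=
      fun cf a b c d => (jade_integrable4 z hmeas hL4 a b c d).const_mul cf
    have swap : ∫ ω, (xst ω ⬝ᵥ A.mulVec (xst ω)) * xst ω k * xst ω l
        = ∑ d, ∑ c, ∑ a, ∑ b, (B a b * (Uᵀ k c * Uᵀ l d))
            * ∫ ω, z a ω * z b ω * z c ω * z d ω := by
      rw [hint, integral_finset_sum _ (fun d _ => integrable_finset_sum _
        (fun c _ => integrable_finset_sum _ (fun a _ => integrable_finset_sum _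
        (fun b _ => HI _ a b c d))))]
      refine Finset.sum_congr rfl fun d _ => ?_
      rw [integral_finset_sum _ (fun c _ => integrable_finset_sum _
        (fun a _ => integrable_finset_sum _ (fun b _ => HI _ a b c d)))]
      refine Finset.sum_congr rfl fun c _ => ?_
      rw [integral_finset_sum _ (fun a _ => integrable_finset_sum _
        (fun b _ => HI _ a b c d))]
      refine Finset.sum_congr rfl fun a _ => ?_
      rw [integral_finset_sum _ (fun b _ => HI _ a b c d)]
      refine Finset.sum_congr rfl fun b _ => ?_
      exact integral_const_mul _ _
    rw [swap]
    have hM4 : ∀ a b c d : Fin p, ∫ ω, z a ω * z b ω * z c ω * z d ω =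
        (if a = b then (1:ℝ) else 0) * (if c = d then 1 else 0)
        + (if a = c then 1 else 0) * (if b = d then 1 else 0)
        + (if a = d then 1 else 0) * (if b = c then 1 else 0)
        + (if a = b ∧ a = c ∧ a = d then κ a else 0) :=
      jade_M4 z κ hmeas hindep hmean hvar hκ
    simp only [hM4, mul_add, Finset.sum_add_distrib]
    have hS1 : ∑ d : Fin p, ∑ c : Fin p, ∑ a : Fin p, ∑ b : Fin p,
        (B a b * (Uᵀ k c * Uᵀ l d)) * ((if a = b then (1:ℝ) else 0) * (if c = d then 1 else 0))
        = A.trace * (if k = l then 1 else 0) := by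
      rw [jade_sum4_pair1 (fun a b c d => B a b * (Uᵀ k c * Uᵀ l d))]
      have e1 : ∀ d : Fin p, ∑ a, B a a * (Uᵀ k d * Uᵀ l d)
          = (∑ a, B a a) * (Uᵀ k d * Uᵀ l d) := fun d => by rw [Finset.sum_mul]
      rw [Finset.sum_congr rfl fun d _ => e1 d, ← Finset.mul_sum, hUU k l]
      congr 1
    have hS2 : ∑ d : Fin p, ∑ c : Fin p, ∑ a : Fin p, ∑ b : Fin p,
        (B a b * (Uᵀ k c * Uᵀ l d)) * ((if a = c then (1:ℝ) else 0) * (if b = d then 1 else 0))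
        = A k l := by
      rw [jade_sum4_pair2 (fun a b c d => B a b * (Uᵀ k c * Uᵀ l d))]
      rw [← hBA, Matrix.mul_apply]
      simp only [Matrix.mul_apply, Finset.sum_mul, Matrix.transpose_apply]
      refine Finset.sum_congr rfl fun d _ => Finset.sum_congr rfl fun c _ => by ring
    have hS3 : ∑ d : Fin p, ∑ c : Fin p, ∑ a : Fin p, ∑ b : Fin p,
        (B a b * (Uᵀ k c * Uᵀ l d)) * ((if a = d then (1:ℝ) else 0) * (if b = c then 1 else 0))
        = A l k := by
      rw [jade_sum4_pair3 (fun a b c d => B a b * (Uᵀ k c * Uᵀ l d))]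
      rw [← hBA, Matrix.mul_apply]
      simp only [Matrix.mul_apply, Finset.sum_mul, Matrix.transpose_apply]
      rw [Finset.sum_comm]
      refine Finset.sum_congr rfl fun d _ => Finset.sum_congr rfl fun c _ => by ring
    have hS4 : ∑ d : Fin p, ∑ c : Fin p, ∑ a : Fin p, ∑ b : Fin p,
        (B a b * (Uᵀ k c * Uᵀ l d)) * (if a = b ∧ a = c ∧ a = d then κ a else 0)
        = ∑ a, Uᵀ k a * (κ a * B a a) * U a l := by
      rw [jade_sum4_diag (fun a b c d => B a b * (Uᵀ k c * Uᵀ l d)) κ]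
      refine Finset.sum_congr rfl fun a _ => ?_
      simp only [Matrix.transpose_apply]
      ring
    rw [hS1, hS2, hS3, hS4]
  -- assemble
  ext k l
  have hRHS : (Uᵀ * Matrix.diagonal (fun a => κ a * B a a) * U) k l
      = ∑ a, Uᵀ k a * (κ a * B a a) * U a l := by
    rw [Matrix.mul_apply]
    simp only [Matrix.mul_diagonal]
  rw [hBdef] at hRHS
  simp only [cumulantMatrix, Matrix.sub_apply, Matrix.smul_apply, Matrix.transpose_apply,
    Matrix.one_apply, smul_eq_mul, Matrix.of_apply]
  rw [key k l, hRHS, ← hBdef]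
  ring

end Probabilistic

/-- The JADE criterion over orthogonal matrices `V` is bounded by `∑ l κ_l^2` and
attains this maximum at `V = P J U` for any permutation matrix `P` and sign-change
matrix `J`. -/
theorem jade_criterion_maximized_by_signed_permutation
    {Ω : Type*} [MeasureSpace Ω] [IsProbabilityMeasure (ℙ : Measure Ω)]
    {p : ℕ} (z : Fin p → Ω → ℝ) (κ : Fin p → ℝ)
    (hmeas : ∀ i, Measurable (z i))
    (hindep : iIndepFun z ℙ)
    (hL4 : ∀ i, MemLp (z i) 4 ℙ)
    (hmean : ∀ i, ∫ ω, z i ω = 0)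
    (hvar : ∀ i, ∫ ω, (z i ω) ^ 2 = 1)
    (hκ : ∀ i, κ i = (∫ ω, (z i ω) ^ 4) - 3)
    (U : Matrix (Fin p) (Fin p) ℝ) (hU : U * Uᵀ = 1)
    (xst : Ω → Fin p → ℝ) (hxst : ∀ ω, xst ω = Uᵀ.mulVec fun i => z i ω)
    (D : Matrix (Fin p) (Fin p) ℝ → ℝ)
    (hD : ∀ V, D V = ∑ i, ∑ j, ∑ k,
        ((V * cumulantMatrix xst (Matrix.single i j 1) * Vᵀ) k k) ^ 2) :
    (∀ V : Matrix (Fin p) (Fin p) ℝ, V * Vᵀ = 1 → D V ≤ ∑ l, (κ l) ^ 2) ∧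
      (∀ (σ : Equiv.Perm (Fin p)) (s : Fin p → ℝ), (∀ k, s k = 1 ∨ s k = -1) →
        ∀ PJ : Matrix (Fin p) (Fin p) ℝ,
          (∀ k l, PJ k l = if l = σ k then s k else 0) →
          D (PJ * U) = ∑ l, (κ l) ^ 2) := by
  classical
  have hU' : Uᵀ * U = 1 := mul_eq_one_comm.mp hU
  have CUM := jade_cum z κ hmeas hindep hL4 hmean hvar hκ U hU xst hxst
  have hEij : ∀ i j a : Fin p, (U * Matrix.single i j (1:ℝ) * Uᵀ) a a = U a i * U a j := by
    intro i j a
    simp [Matrix.mul_apply, Matrix.single, ite_and, Finset.sum_ite_eq, Finset.mul_sum]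
  have cancelU : ∀ X : Matrix (Fin p) (Fin p) ℝ, U * (Uᵀ * X) = X := fun X => by
    rw [← Matrix.mul_assoc, hU, Matrix.one_mul]
  have cancelU' : ∀ X : Matrix (Fin p) (Fin p) ℝ, Uᵀ * (U * X) = X := fun X => by
    rw [← Matrix.mul_assoc, hU', Matrix.one_mul]
  have DF : ∀ V : Matrix (Fin p) (Fin p) ℝ,
      D V = ∑ k, ∑ a, ((V * Uᵀ) k a)^4 * κ a ^2 := by
    intro V
    rw [hD V]
    set W := V * Uᵀ with hW
    have hVW : V = W * U := by rw [hW, Matrix.mul_assoc, hU', Matrix.mul_one]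
    have hE : ∀ i j k : Fin p, (V * cumulantMatrix xst (Matrix.single i j 1) * Vᵀ) k k
        = (Uᵀ * Matrix.diagonal (fun a => W k a ^2 * κ a) * U) i j := by
      intro i j k
      rw [CUM (Matrix.single i j 1)]
      have hVC : V * (Uᵀ * Matrix.diagonal
            (fun a => κ a * (U * Matrix.single i j (1:ℝ) * Uᵀ) a a) * U) * Vᵀ
          = W * Matrix.diagonal
            (fun a => κ a * (U * Matrix.single i j (1:ℝ) * Uᵀ) a a) * Wᵀ := by
        rw [hVW, Matrix.transpose_mul]
        simp only [Matrix.mul_assoc]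
        rw [cancelU, cancelU]
      rw [hVC, Matrix.mul_apply, Matrix.mul_apply]
      simp only [Matrix.mul_diagonal, Matrix.transpose_apply, hEij]
      refine Finset.sum_congr rfl fun a _ => by ring
    calc ∑ i, ∑ j, ∑ k, ((V * cumulantMatrix xst (Matrix.single i j 1) * Vᵀ) k k)^2
        = ∑ i, ∑ j, ∑ k, ((Uᵀ * Matrix.diagonal (fun a => W k a ^2 * κ a) * U) i j)^2 := by
          exact Finset.sum_congr rfl fun i _ => Finset.sum_congr rfl fun j _ =>
            Finset.sum_congr rfl fun k _ => by rw [hE i j k]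
      _ = ∑ i, ∑ k, ∑ j, ((Uᵀ * Matrix.diagonal (fun a => W k a ^2 * κ a) * U) i j)^2 := by
          exact Finset.sum_congr rfl fun i _ => Finset.sum_comm
      _ = ∑ k, ∑ i, ∑ j, ((Uᵀ * Matrix.diagonal (fun a => W k a ^2 * κ a) * U) i j)^2 :=
          Finset.sum_comm
      _ = ∑ k, ∑ a, (W k a ^2 * κ a)^2 :=
          Finset.sum_congr rfl fun k _ => jade_trace_trick U hU _
      _ = ∑ k, ∑ a, W k a ^4 * κ a ^2 :=
          Finset.sum_congr rfl fun k _ => Finset.sum_congr rfl fun a _ => by ring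
  constructor
  · intro V hV
    rw [DF V]
    have hWO : (V * Uᵀ) * (V * Uᵀ)ᵀ = 1 := by
      rw [Matrix.transpose_mul, Matrix.transpose_transpose]
      calc V * Uᵀ * (U * Vᵀ) = V * (Uᵀ * (U * Vᵀ)) := by rw [Matrix.mul_assoc]
        _ = V * Vᵀ := by rw [cancelU']
        _ = 1 := hV
    have hcol : ∀ a, ∑ k, ((V * Uᵀ) k a)^2 = 1 := by
      intro a
      have h := congrFun (congrFun (mul_eq_one_comm.mp hWO : (V * Uᵀ)ᵀ * (V * Uᵀ) = 1) a) a
      rw [Matrix.mul_apply, Matrix.one_apply_eq] at h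
      rw [← h]
      exact Finset.sum_congr rfl fun k _ => by rw [Matrix.transpose_apply]; ring
    rw [Finset.sum_comm]
    refine Finset.sum_le_sum fun a _ => ?_
    have h1 : ∑ k, ((V * Uᵀ) k a)^4 ≤ 1 := by
      have h2 : ∑ k, (((V * Uᵀ) k a)^2)^2 ≤ (∑ k, ((V * Uᵀ) k a)^2)^2 :=
        Finset.sum_sq_le_sq_sum_of_nonneg (fun k _ => sq_nonneg _)
      rw [hcol a] at h2
      calc ∑ k, ((V * Uᵀ) k a)^4 = ∑ k, (((V * Uᵀ) k a)^2)^2 :=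
            Finset.sum_congr rfl fun k _ => by ring
        _ ≤ 1^2 := h2
        _ = 1 := one_pow 2
    calc ∑ k, ((V * Uᵀ) k a)^4 * κ a ^2 = (∑ k, ((V * Uᵀ) k a)^4) * κ a ^2 := by
          rw [Finset.sum_mul]
      _ ≤ 1 * κ a ^2 := mul_le_mul_of_nonneg_right h1 (sq_nonneg _)
      _ = κ a ^2 := one_mul _
  · intro σ s hs PJ hPJ
    rw [DF (PJ * U)]
    have hPJU : PJ * U * Uᵀ = PJ := by rw [Matrix.mul_assoc, hU, Matrix.mul_one]
    rw [hPJU]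
    have hrow : ∀ k, ∑ a, (PJ k a)^4 * κ a ^2 = κ (σ k) ^2 := by
      intro k
      have e : ∀ a, (PJ k a)^4 * κ a ^2 = (if a = σ k then s k ^ 4 * κ a ^2 else 0) := by
        intro a; rw [hPJ k a]; by_cases h : a = σ k <;> simp [h]
      rw [Finset.sum_congr rfl fun a _ => e a, Finset.sum_ite_eq' Finset.univ (σ k)]
      simp only [Finset.mem_univ, if_true]
      have hs4 : s k ^ 4 = 1 := by rcases hs k with h | h <;> rw [h] <;> norm_num
      rw [hs4, one_mul]
    rw [Finset.sum_congr rfl fun k _ => hrow k]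
    exact Equiv.sum_comp σ (fun l => κ l ^ 2)
end
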